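/- Every graded trim lattice is distributive. -/

import Mathlib

variable {α : Type*}

/-- An element is join-irreducible if it is not the minimum and is not a join
of two strictly smaller elements. -/
def JoinIrred [Lattice α] (a : α) : Prop :=
  ¬ IsBot a ∧ ∀ b c : α, b < a → c < a → b ⊔ c ≠ a

/-- An element is meet-irreducible if it is not the maximum and is not a meet
of two strictly larger elements. -/
def MeetIrred [Lattice α] (a : α) : Prop :=
  ¬ IsTop a ∧ ∀ b c : α, a < b → a < c → b ⊓ c ≠ a

/-- An element `x` is left modular if `(y ⊔ x) ⊓ z = y ⊔ (x ⊓ z)` for all `y < z`. -/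
def LeftModular [Lattice α] (x : α) : Prop :=
  ∀ y z : α, y < z → (y ⊔ x) ⊓ z = y ⊔ (x ⊓ z)

/-- A maximal chain `⊥ = x 0 ⋖ x 1 ⋖ ⋯ ⋖ x n = ⊤` all of whose elements are left modular. -/
def IsLMChain [Lattice α] {n : ℕ} (x : Fin (n + 1) → α) : Prop :=
  IsBot (x 0) ∧ IsTop (x (Fin.last n)) ∧ (∀ i : Fin n, x i.castSucc ⋖ x i.succ) ∧
    ∀ i, LeftModular (x i)

/-- A finite lattice is trim if it has a left modular maximal chain of `n + 1` elements,
exactly `n` join-irreducibles and exactly `n` meet-irreducibles. -/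
def Trim (α : Type*) [Lattice α] [Finite α] : Prop :=
  ∃ (n : ℕ) (x : Fin (n + 1) → α), IsLMChain x ∧
    Nat.card {v : α // JoinIrred v} = n ∧ Nat.card {v : α // MeetIrred v} = n

/-- All maximal (saturated) chains between any two fixed endpoints have the same length. -/
def Graded (α : Type*) [Lattice α] : Prop :=
  ∀ (m k : ℕ) (c : Fin (m + 1) → α) (d : Fin (k + 1) → α),
    (∀ i : Fin m, c i.castSucc ⋖ c i.succ) → (∀ i : Fin k, d i.castSucc ⋖ d i.succ) →
    c 0 = d 0 → c (Fin.last m) = d (Fin.last k) → m = k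

lemma aux_le_of_ji [Lattice α] [Finite α] (c : α) :
    ∀ a : α, (∀ j, JoinIrred j → j ≤ a → j ≤ c) → a ≤ c := by
  intro a
  induction a using WellFoundedLT.induction with
  | ind a IH =>
    intro h
    by_cases hji : JoinIrred a
    · exact h a hji le_rfl
    · unfold JoinIrred at hji
      push_neg at hji
      by_cases hb : IsBot a
      · exact hb c
      · obtain ⟨u, v, hu, hv, huv⟩ := hji hb
        have h1 : u ≤ c := IH u hu (fun j hj hle => h j hj (hle.trans hu.le))
        have h2 : v ≤ c := IH v hv (fun j hj hle => h j hj (hle.trans hv.le))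
        rw [← huv]
        exact sup_le h1 h2

lemma aux_le_of_mi [Lattice α] [Finite α] (c : α) :
    ∀ a : α, (∀ m, MeetIrred m → a ≤ m → c ≤ m) → c ≤ a := by
  intro a
  induction a using WellFoundedGT.induction with
  | ind a IH =>
    intro h
    by_cases hmi : MeetIrred a
    · exact h a hmi le_rfl
    · unfold MeetIrred at hmi
      push_neg at hmi
      by_cases hb : IsTop a
      · exact hb c
      · obtain ⟨u, v, hu, hv, huv⟩ := hmi hb
        have h1 : c ≤ u := IH u hu (fun m hm hle => h m hm (hu.le.trans hle))
        have h2 : c ≤ v := IH v hv (fun m hm hle => h m hm (hv.le.trans hle))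
        rw [← huv]
        exact le_inf h1 h2

lemma aux_exists_chain [Lattice α] [Finite α] (b : α) :
    ∀ a : α, a ≤ b → ∃ (p : ℕ) (c : Fin (p+1) → α), c 0 = a ∧ c (Fin.last p) = b ∧
      ∀ i : Fin p, c i.castSucc ⋖ c i.succ := by
  intro a
  induction a using WellFoundedGT.induction with
  | ind a IH =>
    intro hab
    rcases eq_or_lt_of_le hab with heq | hlt
    · exact ⟨0, fun _ => a, rfl, heq, fun i => i.elim0⟩
    · have : Fintype α := Fintype.ofFinite α
      classical
      have hs : (Finset.univ.filter fun t => a < t ∧ t ≤ b).Nonempty :=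
        ⟨b, by simp [hlt]⟩
      obtain ⟨a', ha'mem, ha'min⟩ := Finset.exists_minimal hs
      simp only [Finset.mem_filter, Finset.mem_univ, true_and] at ha'mem
      have hcov : a ⋖ a' := by
        refine ⟨ha'mem.1, fun t ht1 ht2 => ?_⟩
        exact ht2.not_ge (ha'min (by simp [ht1, ht2.le.trans ha'mem.2]) ht2.le)
      obtain ⟨p, c, hc0, hcl, hccov⟩ := IH a' ha'mem.1 ha'mem.2
      refine ⟨p + 1, Fin.cases a c, by simp, ?_, ?_⟩
      · simpa [Fin.last] using hcl
      · intro i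
        induction i using Fin.cases with
        | zero =>
          have h0 : (Fin.cases a c : Fin (p+2) → α) (0 : Fin (p+1)).castSucc = a := by
            simp
          have h1 : (Fin.cases a c : Fin (p+2) → α) (0 : Fin (p+1)).succ = c 0 :=
            Fin.cases_succ 0
          rw [h0, h1, hc0]
          exact hcov
        | succ k =>
          have e1 : (k.succ : Fin (p+1)).castSucc = (k.castSucc).succ := (Fin.succ_castSucc k).symm
          have e2 : (Fin.cases a c : Fin (p+2) → α) (k.succ).castSucc = c k.castSucc := by
            rw [e1]; simp
          have e3 : (Fin.cases a c : Fin (p+2) → α) (k.succ).succ = c k.succ := by simp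
          rw [e2, e3]
          exact hccov k

lemma aux_concat [Lattice α] {p : ℕ} :
    ∀ (q : ℕ) (c1 : Fin (p+1) → α) (c2 : Fin (q+1) → α),
    c1 (Fin.last p) = c2 0 →
    (∀ i : Fin p, c1 i.castSucc ⋖ c1 i.succ) → (∀ i : Fin q, c2 i.castSucc ⋖ c2 i.succ) →
    ∃ c : Fin (p+q+1) → α, c 0 = c1 0 ∧ c (Fin.last (p+q)) = c2 (Fin.last q) ∧
      ∀ i : Fin (p+q), c i.castSucc ⋖ c i.succ := by
  intro q
  induction q with
  | zero =>
    intro c1 c2 hmid h1 h2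
    exact ⟨c1, rfl, hmid, h1⟩
  | succ q IH =>
    intro c1 c2 hmid h1 h2
    set c2' : Fin (q+1) → α := fun i => c2 i.castSucc with hc2'
    have hmid' : c1 (Fin.last p) = c2' 0 := by
      rw [hmid]; simp [hc2']
    have h2' : ∀ i : Fin q, c2' i.castSucc ⋖ c2' i.succ := by
      intro i
      have e1 : c2' i.succ = c2 (i.castSucc).succ := by
        exact congrArg c2 (Fin.ext rfl)
      have e2 : c2' i.castSucc = c2 (i.castSucc).castSucc := rfl
      rw [e1, e2]
      exact h2 i.castSucc
    obtain ⟨c, hc0, hcl, hccov⟩ := IH c1 c2' hmid' h1 h2'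
    refine ⟨Fin.snoc c (c2 (Fin.last (q+1))), ?_, ?_, ?_⟩
    · have h0 : (0 : Fin (p+q+2)) = (0 : Fin (p+q+1)).castSucc := by simp
      rw [h0, Fin.snoc_castSucc, hc0]
    · simp
    · intro i
      rcases Fin.eq_castSucc_or_eq_last i with ⟨k, hk⟩ | hk
      · subst hk
        have e3 : (k.castSucc).succ = (k.succ).castSucc := Fin.succ_castSucc k
        rw [e3, Fin.snoc_castSucc, Fin.snoc_castSucc]
        exact hccov k
      · subst hk
        rw [show (Fin.last (p.add q) : Fin (p+q+1)) = Fin.last (p+q) from rfl]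
        have e3 : (Fin.last (p+q)).succ = Fin.last (p+q+1) := Fin.succ_last _
        rw [e3, Fin.snoc_castSucc]
        have e7 := @Fin.snoc_last (p+q+1) (fun _ => α) (c2 (Fin.last (q+1))) c
        rw [e7, hcl]
        have e5 : c2' (Fin.last q) = c2 (Fin.last q).castSucc := rfl
        have e6 : Fin.last (q+1) = (Fin.last q).succ := (Fin.succ_last _).symm
        rw [e5, e6]
        exact h2 (Fin.last q)

lemma aux_count_up (g : ℕ → ℕ) : ∀ p : ℕ, (∀ k, k < p → g k < g (k+1)) → g 0 + p ≤ g p := by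
  intro p
  induction p with
  | zero => simp
  | succ p IH =>
    intro h
    have h1 := IH (fun k hk => h k (hk.trans (Nat.lt_succ_self p)))
    have h2 := h p (Nat.lt_succ_self p)
    omega

lemma aux_count_down (g : ℕ → ℕ) : ∀ p : ℕ, (∀ k, k < p → g (k+1) < g k) → g p + p ≤ g 0 := by
  intro p
  induction p with
  | zero => simp
  | succ p IH =>
    intro h
    have h1 := IH (fun k hk => h k (hk.trans (Nat.lt_succ_self p)))
    have h2 := h p (Nat.lt_succ_self p)
    omega


/-- Every graded trim lattice is distributive. -/
theorem graded_trim_distributive [Lattice α] [Finite α] (htrim : Trim α) (hgr : Graded α) :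
    ∀ a b c : α, a ⊓ (b ⊔ c) = (a ⊓ b) ⊔ (a ⊓ c) := by
  classical
  obtain ⟨n, x, ⟨hbot, htop, hcov, _hlm⟩, hJcard, hMcard⟩ := htrim
  have : Fintype α := Fintype.ofFinite α
  have hxsm : StrictMono x := Fin.strictMono_iff_lt_succ.mpr (fun i => (hcov i).1)
  -- join-irreducible side
  have hTne : ∀ v : α, JoinIrred v →
      (Finset.univ.filter fun i : Fin (n+1) => v ≤ x i).Nonempty :=
    fun v _ => ⟨Fin.last n, by simp [htop v]⟩
  set F0 : {v : α // JoinIrred v} → Fin (n+1) :=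
    fun v => (Finset.univ.filter fun i : Fin (n+1) => v.1 ≤ x i).min' (hTne v.1 v.2) with hF0def
  have hF0mem : ∀ v, v.1 ≤ x (F0 v) :=
    fun v => (Finset.mem_filter.mp (Finset.min'_mem _ (hTne v.1 v.2))).2
  have hF0min : ∀ v (i : Fin (n+1)), v.1 ≤ x i → F0 v ≤ i :=
    fun v i h => Finset.min'_le _ _ (by simp [h])
  have hF0ne : ∀ v, F0 v ≠ 0 := by
    intro v h
    exact v.2.1 (fun w => le_trans (le_trans (hF0mem v) (le_of_eq (by rw [h]))) (hbot w))
  set F : {v : α // JoinIrred v} → Fin n := fun v => (F0 v).pred (hF0ne v) with hFdef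
  have hFsucc : ∀ v, (F v).succ = F0 v := fun v => Fin.succ_pred _ _
  have hF1 : ∀ v, v.1 ≤ x (F v).succ := by
    intro v; rw [hFsucc]; exact hF0mem v
  have hF2 : ∀ v, ¬ v.1 ≤ x (F v).castSucc := by
    intro v hle
    have h1 : F0 v ≤ (F v).castSucc := hF0min v _ hle
    have h2 : (F v).castSucc < (F v).succ := Fin.castSucc_lt_succ
    rw [hFsucc] at h2
    exact absurd h1 (not_le.mpr h2)
  have hF3 : ∀ (v) (i : Fin n), v.1 ≤ x i.succ → ¬ v.1 ≤ x i.castSucc → F v = i := by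
    intro v i hle hnle
    have h1 : F0 v ≤ i.succ := hF0min v _ hle
    have h2 : i.castSucc < F0 v := by
      by_contra hc
      push_neg at hc
      exact hnle (le_trans (hF0mem v) (hxsm.monotone hc))
    have h3 : F0 v = i.succ := le_antisymm h1 (Fin.castSucc_lt_iff_succ_le.mp h2)
    have h4 : (F v).succ = i.succ := by rw [hFsucc, h3]
    exact Fin.succ_injective _ h4
  have hFsurj : Function.Surjective F := by
    intro i
    by_contra hc
    push_neg at hc
    have hle : x i.succ ≤ x i.castSucc := by
      apply aux_le_of_ji
      intro j hj hjle
      by_contra hnle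
      exact hc ⟨j, hj⟩ (hF3 ⟨j, hj⟩ i hjle hnle)
    exact (hxsm (Fin.castSucc_lt_succ (i := i))).not_ge hle
  have hcardJ : Fintype.card {v : α // JoinIrred v} = Fintype.card (Fin n) := by
    rw [Fintype.card_fin, ← Nat.card_eq_fintype_card, hJcard]
  have hFbij : Function.Bijective F :=
    (Fintype.bijective_iff_surjective_and_card F).mpr ⟨hFsurj, hcardJ⟩
  set eJ := Equiv.ofBijective F hFbij with heJ
  set jf : Fin n → α := fun i => (eJ.symm i).1 with hjf
  have hj_ji : ∀ i, JoinIrred (jf i) := fun i => (eJ.symm i).2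
  have hjF : ∀ i, F (eJ.symm i) = i := fun i => eJ.apply_symm_apply i
  have hj_le : ∀ i, jf i ≤ x i.succ := by
    intro i; have := hF1 (eJ.symm i); rwa [hjF] at this
  have hj_nle : ∀ i, ¬ jf i ≤ x i.castSucc := by
    intro i; have := hF2 (eJ.symm i); rwa [hjF] at this
  have hj_eq : ∀ v (hv : JoinIrred v), jf (F ⟨v, hv⟩) = v := by
    intro v hv
    show (eJ.symm (eJ ⟨v, hv⟩)).1 = v
    rw [eJ.symm_apply_apply]
  -- meet-irreducible side
  have hSne : ∀ v : α, MeetIrred v →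
      (Finset.univ.filter fun i : Fin (n+1) => x i ≤ v).Nonempty :=
    fun v _ => ⟨0, by simp [hbot v]⟩
  set G0 : {v : α // MeetIrred v} → Fin (n+1) :=
    fun v => (Finset.univ.filter fun i : Fin (n+1) => x i ≤ v.1).max' (hSne v.1 v.2) with hG0def
  have hG0mem : ∀ v, x (G0 v) ≤ v.1 :=
    fun v => (Finset.mem_filter.mp (Finset.max'_mem _ (hSne v.1 v.2))).2
  have hG0max : ∀ v (i : Fin (n+1)), x i ≤ v.1 → i ≤ G0 v :=
    fun v i h => Finset.le_max' _ _ (by simp [h])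
  have hG0ne : ∀ v, G0 v ≠ Fin.last n := by
    intro v h
    exact v.2.1 (fun w => le_trans (le_trans (htop w) (le_of_eq (by rw [h]))) (hG0mem v))
  set G : {v : α // MeetIrred v} → Fin n := fun v => (G0 v).castPred (hG0ne v) with hGdef
  have hGcast : ∀ v, (G v).castSucc = G0 v := fun v => Fin.castSucc_castPred _ _
  have hG1 : ∀ v, x (G v).castSucc ≤ v.1 := by
    intro v; rw [hGcast]; exact hG0mem v
  have hG2 : ∀ v, ¬ x (G v).succ ≤ v.1 := by
    intro v hle
    have h1 : (G v).succ ≤ G0 v := hG0max v _ hle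
    have h2 : (G v).castSucc < (G v).succ := Fin.castSucc_lt_succ
    rw [hGcast] at h2
    exact absurd h1 (not_le.mpr h2)
  have hG3 : ∀ (v) (i : Fin n), x i.castSucc ≤ v.1 → ¬ x i.succ ≤ v.1 → G v = i := by
    intro v i hle hnle
    have h1 : i.castSucc ≤ G0 v := hG0max v _ hle
    have h2 : G0 v < i.succ := by
      by_contra hc
      push_neg at hc
      exact hnle (le_trans (hxsm.monotone hc) (hG0mem v))
    have h3 : G0 v = i.castSucc := le_antisymm (Fin.le_castSucc_iff.mpr h2) h1
    have h4 : (G v).castSucc = i.castSucc := by rw [hGcast, h3]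
    exact Fin.castSucc_injective _ h4
  have hGsurj : Function.Surjective G := by
    intro i
    by_contra hc
    push_neg at hc
    have hle : x i.succ ≤ x i.castSucc := by
      apply aux_le_of_mi
      intro m hm hmle
      by_contra hnle
      exact hc ⟨m, hm⟩ (hG3 ⟨m, hm⟩ i hmle hnle)
    exact (hxsm (Fin.castSucc_lt_succ (i := i))).not_ge hle
  have hcardM : Fintype.card {v : α // MeetIrred v} = Fintype.card (Fin n) := by
    rw [Fintype.card_fin, ← Nat.card_eq_fintype_card, hMcard]
  have hGbij : Function.Bijective G :=
    (Fintype.bijective_iff_surjective_and_card G).mpr ⟨hGsurj, hcardM⟩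
  set eM := Equiv.ofBijective G hGbij with heM
  set mf : Fin n → α := fun i => (eM.symm i).1 with hmf
  have hm_mi : ∀ i, MeetIrred (mf i) := fun i => (eM.symm i).2
  have hmG : ∀ i, G (eM.symm i) = i := fun i => eM.apply_symm_apply i
  have hm_ge : ∀ i, x i.castSucc ≤ mf i := by
    intro i; have := hG1 (eM.symm i); rwa [hmG] at this
  have hm_nle : ∀ i, ¬ x i.succ ≤ mf i := by
    intro i; have := hG2 (eM.symm i); rwa [hmG] at this
  -- j_i is not below m_i
  have hjm : ∀ i, ¬ jf i ≤ mf i := by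
    intro i hle
    have h1 : x i.castSucc ⊔ jf i ≤ x i.succ :=
      sup_le (hxsm.monotone (Fin.castSucc_lt_succ (i := i)).le) (hj_le i)
    have h2 : x i.castSucc < x i.castSucc ⊔ jf i :=
      lt_of_le_of_ne le_sup_left (fun he => hj_nle i (le_sup_right.trans he.symm.le))
    have h3 : x i.castSucc ⊔ jf i = x i.succ := by
      rcases lt_or_eq_of_le h1 with hlt | he
      · exact absurd hlt ((hcov i).2 h2)
      · exact he
    have h4 : x i.succ ≤ mf i := by
      rw [← h3]
      exact sup_le (hm_ge i) hle
    exact hm_nle i h4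
  -- the key dichotomy
  set If : α → Finset (Fin n) := fun a => Finset.univ.filter (fun i => jf i ≤ a) with hIf
  set Jf : α → Finset (Fin n) := fun a => Finset.univ.filter (fun i => a ≤ mf i) with hJf
  have hIstep : ∀ u w : α, u ⋖ w → (If u).card < (If w).card := by
    intro u w huw
    apply Finset.card_lt_card
    have hsub : If u ⊆ If w := by
      intro i hi
      simp only [hIf, Finset.mem_filter, Finset.mem_univ, true_and] at hi ⊢
      exact hi.trans huw.1.le
    have hex : ∃ v, JoinIrred v ∧ v ≤ w ∧ ¬ v ≤ u := by
      by_contra hcon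
      push_neg at hcon
      exact huw.lt.not_ge (aux_le_of_ji u w (fun j hj hle => hcon j hj hle))
    obtain ⟨v, hv, hvw, hvu⟩ := hex
    rw [Finset.ssubset_iff_of_subset hsub]
    refine ⟨F ⟨v, hv⟩, ?_, ?_⟩
    · simp only [hIf, Finset.mem_filter, Finset.mem_univ, true_and]
      rw [hj_eq v hv]; exact hvw
    · simp only [hIf, Finset.mem_filter, Finset.mem_univ, true_and]
      rw [hj_eq v hv]; exact hvu
  have hJstep : ∀ u w : α, u ⋖ w → (Jf w).card < (Jf u).card := by
    intro u w huw
    apply Finset.card_lt_card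
    have hsub : Jf w ⊆ Jf u := by
      intro i hi
      simp only [hJf, Finset.mem_filter, Finset.mem_univ, true_and] at hi ⊢
      exact huw.1.le.trans hi
    have hex : ∃ v, MeetIrred v ∧ u ≤ v ∧ ¬ w ≤ v := by
      by_contra hcon
      push_neg at hcon
      exact huw.lt.not_ge (aux_le_of_mi w u (fun m hm hle => hcon m hm hle))
    obtain ⟨v, hv, hvu, hvw⟩ := hex
    rw [Finset.ssubset_iff_of_subset hsub]
    refine ⟨G ⟨v, hv⟩, ?_, ?_⟩
    · simp only [hJf, Finset.mem_filter, Finset.mem_univ, true_and]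
      have : mf (G ⟨v, hv⟩) = v := by
        show (eM.symm (eM ⟨v, hv⟩)).1 = v
        rw [eM.symm_apply_apply]
      rw [this]; exact hvu
    · simp only [hJf, Finset.mem_filter, Finset.mem_univ, true_and]
      have : mf (G ⟨v, hv⟩) = v := by
        show (eM.symm (eM ⟨v, hv⟩)).1 = v
        rw [eM.symm_apply_apply]
      rw [this]; exact hvw
  have hI0 : If (x 0) = ∅ := by
    apply Finset.eq_empty_of_forall_notMem
    intro i hi
    simp only [hIf, Finset.mem_filter, Finset.mem_univ, true_and] at hi
    exact (hj_ji i).1 (fun w => hi.trans (hbot w))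
  have hJtop : Jf (x (Fin.last n)) = ∅ := by
    apply Finset.eq_empty_of_forall_notMem
    intro i hi
    simp only [hJf, Finset.mem_filter, Finset.mem_univ, true_and] at hi
    exact (hm_mi i).1 (fun w => (htop w).trans hi)
  have hkey : ∀ (a : α) (i : Fin n), jf i ≤ a ∨ a ≤ mf i := by
    intro a
    obtain ⟨p, c1, hc10, hc1l, hc1cov⟩ := aux_exists_chain a (x 0) (hbot a)
    obtain ⟨q, c2, hc20, hc2l, hc2cov⟩ := aux_exists_chain (x (Fin.last n)) a (htop a)
    obtain ⟨cc, hcc0, hccl, hcccov⟩ := aux_concat q c1 c2 (by rw [hc1l, hc20]) hc1cov hc2cov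
    have hpq : p + q = n := by
      apply hgr (p+q) n cc x hcccov hcov
      · rw [hcc0, hc10]
      · rw [hccl, hc2l]
    have hIcount : p ≤ (If a).card := by
      have hgt := aux_count_up (fun k => (If (c1 ⟨min k p, by omega⟩)).card) p ?_
      · have e0 : (⟨min 0 p, by omega⟩ : Fin (p+1)) = 0 := by
          apply Fin.ext; simp
        have ep : (⟨min p p, by omega⟩ : Fin (p+1)) = Fin.last p := by
          apply Fin.ext; simp [Fin.last]
        rw [e0, ep, hc10, hc1l, hI0] at hgt
        simpa using hgt
      · intro k hk
        have e1 : (⟨min k p, by omega⟩ : Fin (p+1)) = (⟨k, hk⟩ : Fin p).castSucc := by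
          apply Fin.ext; simp [Fin.castSucc]; omega
        have e2 : (⟨min (k+1) p, by omega⟩ : Fin (p+1)) = (⟨k, hk⟩ : Fin p).succ := by
          apply Fin.ext; simp [Fin.succ]; omega
        simp only [e1, e2]
        exact hIstep _ _ (hc1cov ⟨k, hk⟩)
    have hJcount : q ≤ (Jf a).card := by
      have hgt := aux_count_down (fun k => (Jf (c2 ⟨min k q, by omega⟩)).card) q ?_
      · have e0 : (⟨min 0 q, by omega⟩ : Fin (q+1)) = 0 := by
          apply Fin.ext; simp
        have eq' : (⟨min q q, by omega⟩ : Fin (q+1)) = Fin.last q := by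
          apply Fin.ext; simp [Fin.last]
        rw [e0, eq', hc20, hc2l, hJtop] at hgt
        simpa using hgt
      · intro k hk
        have e1 : (⟨min k q, by omega⟩ : Fin (q+1)) = (⟨k, hk⟩ : Fin q).castSucc := by
          apply Fin.ext; simp [Fin.castSucc]; omega
        have e2 : (⟨min (k+1) q, by omega⟩ : Fin (q+1)) = (⟨k, hk⟩ : Fin q).succ := by
          apply Fin.ext; simp [Fin.succ]; omega
        simp only [e1, e2]
        exact hJstep _ _ (hc2cov ⟨k, hk⟩)
    have hdisj : Disjoint (If a) (Jf a) := by
      rw [Finset.disjoint_left]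
      intro i hi hj
      simp only [hIf, Finset.mem_filter, Finset.mem_univ, true_and] at hi
      simp only [hJf, Finset.mem_filter, Finset.mem_univ, true_and] at hj
      exact hjm i (hi.trans hj)
    have hucard : (If a ∪ Jf a).card = (If a).card + (Jf a).card :=
      Finset.card_union_of_disjoint hdisj
    have hn_le : n ≤ (If a ∪ Jf a).card := by
      rw [hucard]; omega
    have huniv : If a ∪ Jf a = Finset.univ := by
      apply Finset.eq_univ_of_card
      have h1 : (If a ∪ Jf a).card ≤ Fintype.card (Fin n) := Finset.card_le_univ _
      rw [Fintype.card_fin] at h1 ⊢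
      omega
    intro i
    have : i ∈ If a ∪ Jf a := huniv ▸ Finset.mem_univ i
    rcases Finset.mem_union.mp this with h | h
    · left
      simpa only [hIf, Finset.mem_filter, Finset.mem_univ, true_and] using h
    · right
      simpa only [hJf, Finset.mem_filter, Finset.mem_univ, true_and] using h
  -- conclusion
  intro a b c
  refine le_antisymm ?_ le_inf_sup
  apply aux_le_of_ji
  intro v hv hle
  have hva : v ≤ a := hle.trans inf_le_left
  have hvbc : v ≤ b ⊔ c := hle.trans inf_le_right
  set i := F ⟨v, hv⟩ with hi
  have hvi : jf i = v := hj_eq v hv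
  rcases hkey b i with hb | hb
  · rw [hvi] at hb
    exact le_sup_of_le_left (le_inf hva hb)
  · rcases hkey c i with hc | hc
    · rw [hvi] at hc
      exact le_sup_of_le_right (le_inf hva hc)
    · exfalso
      apply hjm i
      rw [hvi]
      exact hvbc.trans (sup_le hb hc)
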